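/- Let n ≥ 1, let p ∈ ℝⁿ, let V : ℝⁿ → ℝ, let E ∈ ℝ, and let r, s : ℝⁿ → ℝ be C² functions with r > 0 everywhere, satisfying (1/2)Δr(x) − p·∇r(x) = −(V(x) + E) r(x) and (1/2)Δs(x) + p·∇s(x) = −(V(x) + E) s(x) for all x ∈ ℝⁿ. Then the product π := r·s satisfies (1/2)Δπ(x) + div((p − ∇r(x)/r(x)) π(x)) = 0 for all x ∈ ℝⁿ, where the divergence is div(F) = Σ_{i=1}^{n} ∂_i F_i applied to the vector field x ↦ (p − ∇r(x)/r(x)) π(x). -/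

import Mathlib

open scoped RealInnerProductSpace
open MeasureTheory

/-- The Euclidean Laplacian: sum of second partial derivatives. -/
noncomputable def lap {n : ℕ} (f : EuclideanSpace ℝ (Fin n) → ℝ)
    (x : EuclideanSpace ℝ (Fin n)) : ℝ :=
  ∑ i : Fin n,
    fderiv ℝ (fun y => fderiv ℝ f y (EuclideanSpace.single i 1)) x (EuclideanSpace.single i 1)

/-- The divergence of a vector field: sum of partial derivatives of the components. -/
noncomputable def dvg {n : ℕ} (F : EuclideanSpace ℝ (Fin n) → EuclideanSpace ℝ (Fin n))
    (x : EuclideanSpace ℝ (Fin n)) : ℝ :=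
  ∑ i : Fin n, fderiv ℝ (fun y => F y i) x (EuclideanSpace.single i 1)

/-- A function on ℝⁿ is ℤⁿ-periodic if it is invariant under translation by
every integer vector. -/
def IsZnPeriodic {n : ℕ} {α : Type*} (f : EuclideanSpace ℝ (Fin n) → α) : Prop :=
  ∀ (x : EuclideanSpace ℝ (Fin n)) (k : Fin n → ℤ),
    f (x + ∑ i : Fin n, (k i : ℝ) • EuclideanSpace.single i (1 : ℝ)) = f x

/-- The unit cube [0,1]ⁿ in ℝⁿ. -/
def unitCube (n : ℕ) : Set (EuclideanSpace ℝ (Fin n)) :=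
  {x | ∀ i, x i ∈ Set.Icc (0 : ℝ) 1}

section Aux
variable {n : ℕ}

lemma grad_coord (f : EuclideanSpace ℝ (Fin n) → ℝ) (x : EuclideanSpace ℝ (Fin n)) (i : Fin n) :
    gradient f x i = fderiv ℝ f x (EuclideanSpace.single i 1) := by
  have h : ⟪gradient f x, EuclideanSpace.single i (1:ℝ)⟫ = fderiv ℝ f x (EuclideanSpace.single i 1) := by
    rw [gradient]; exact InnerProductSpace.toDual_symm_apply
  rw [← h, EuclideanSpace.inner_single_right]; simp

lemma diff_fderiv_apply (f : EuclideanSpace ℝ (Fin n) → ℝ) (hf : ContDiff ℝ 2 f)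
    (v : EuclideanSpace ℝ (Fin n)) :
    Differentiable ℝ (fun y => fderiv ℝ f y v) :=
  ((hf.fderiv_right (m := 1) (by norm_num)).differentiable one_ne_zero).clm_apply (differentiable_const v)

lemma fderiv_mul_apply (f g : EuclideanSpace ℝ (Fin n) → ℝ) (x v : EuclideanSpace ℝ (Fin n))
    (hf : DifferentiableAt ℝ f x) (hg : DifferentiableAt ℝ g x) :
    fderiv ℝ (fun y => f y * g y) x v = fderiv ℝ f x v * g x + f x * fderiv ℝ g x v := by
  rw [fderiv_fun_mul hf hg]; simp; ring

lemma second_mul (r s : EuclideanSpace ℝ (Fin n) → ℝ)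
    (hr : ContDiff ℝ 2 r) (hs : ContDiff ℝ 2 s) (x v : EuclideanSpace ℝ (Fin n)) :
    fderiv ℝ (fun y => fderiv ℝ (fun z => r z * s z) y v) x v =
      fderiv ℝ (fun y => fderiv ℝ r y v) x v * s x
        + 2 * (fderiv ℝ r x v * fderiv ℝ s x v)
        + r x * fderiv ℝ (fun y => fderiv ℝ s y v) x v := by
  have hr1 : Differentiable ℝ r := hr.differentiable two_ne_zero
  have hs1 : Differentiable ℝ s := hs.differentiable two_ne_zero
  have hDr := diff_fderiv_apply r hr v
  have hDs := diff_fderiv_apply s hs v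
  have hfun : (fun y => fderiv ℝ (fun z => r z * s z) y v)
      = fun y => r y * fderiv ℝ s y v + s y * fderiv ℝ r y v := by
    funext y
    rw [fderiv_mul_apply r s y v (hr1 y) (hs1 y)]; ring
  rw [hfun, fderiv_fun_add ((hr1 x).fun_mul (hDs x)) ((hs1 x).fun_mul (hDr x))]
  simp only [ContinuousLinearMap.add_apply]
  rw [fderiv_mul_apply r _ x v (hr1 x) (hDs x), fderiv_mul_apply s _ x v (hs1 x) (hDr x)]
  ring

end Aux

/-- the product π = r·s of the two tilted eigenfunctions solves the
stationary Fokker–Planck equation (1/2)Δπ + div((p − ∇r/r)π) = 0. -/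
theorem product_is_invariant_density (n : ℕ) (hn : 1 ≤ n)
    (p : EuclideanSpace ℝ (Fin n)) (V : EuclideanSpace ℝ (Fin n) → ℝ) (E : ℝ)
    (r s : EuclideanSpace ℝ (Fin n) → ℝ)
    (hr : ContDiff ℝ 2 r) (hs : ContDiff ℝ 2 s)
    (hrpos : ∀ x, 0 < r x)
    (heqr : ∀ x, (1/2) * lap r x - ⟪p, gradient r x⟫ = -(V x + E) * r x)
    (heqs : ∀ x, (1/2) * lap s x + ⟪p, gradient s x⟫ = -(V x + E) * s x) :
    ∀ x, (1/2) * lap (fun y => r y * s y) x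
        + dvg (fun y => (r y * s y) • (p - (r y)⁻¹ • gradient r y)) x = 0 := by

  intro x
  have hr1 : Differentiable ℝ r := hr.differentiable two_ne_zero
  have hs1 : Differentiable ℝ s := hs.differentiable two_ne_zero
  set e : Fin n → EuclideanSpace ℝ (Fin n) := fun i => EuclideanSpace.single i 1 with he
  have hcomp : ∀ i : Fin n, (fun y => ((r y * s y) • (p - (r y)⁻¹ • gradient r y)) i)
      = fun y => r y * (s y * p i) - s y * fderiv ℝ r y (e i) := by
    intro i
    funext y
    have hy := (hrpos y).ne'
    simp only [PiLp.smul_apply, PiLp.sub_apply, smul_eq_mul, grad_coord]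
    field_simp
    ring
  have hdvg : ∀ i : Fin n,
      fderiv ℝ (fun y => ((r y * s y) • (p - (r y)⁻¹ • gradient r y)) i) x (e i)
      = (fderiv ℝ r x (e i) * (s x * p i) + r x * (fderiv ℝ s x (e i) * p i))
        - (fderiv ℝ s x (e i) * fderiv ℝ r x (e i)
            + s x * fderiv ℝ (fun y => fderiv ℝ r y (e i)) x (e i)) := by
    intro i
    rw [hcomp i]
    have hDr := diff_fderiv_apply r hr (e i)
    rw [fderiv_fun_sub ((hr1 x).fun_mul ((hs1 x).fun_mul (differentiableAt_const _)))
        ((hs1 x).fun_mul (hDr x))]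
    simp only [ContinuousLinearMap.sub_apply]
    rw [fderiv_mul_apply r _ x (e i) (hr1 x) ((hs1 x).fun_mul (differentiableAt_const _)),
        fderiv_mul_apply s _ x (e i) (hs1 x) (hDr x),
        fderiv_mul_apply s _ x (e i) (hs1 x) (differentiableAt_const _)]
    simp [fderiv_const]
  have hlap : ∀ i : Fin n,
      fderiv ℝ (fun y => fderiv ℝ (fun z => r z * s z) y (e i)) x (e i)
      = fderiv ℝ (fun y => fderiv ℝ r y (e i)) x (e i) * s x
        + 2 * (fderiv ℝ r x (e i) * fderiv ℝ s x (e i))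
        + r x * fderiv ℝ (fun y => fderiv ℝ s y (e i)) x (e i) :=
    fun i => second_mul r s hr hs x (e i)
  have hip : ∀ (f : EuclideanSpace ℝ (Fin n) → ℝ),
      ⟪p, gradient f x⟫ = ∑ i : Fin n, p i * fderiv ℝ f x (e i) := by
    intro f
    rw [PiLp.inner_apply]; refine Finset.sum_congr rfl fun i _ => ?_; rw [grad_coord]; simp [mul_comm, he]
  have hr2 := heqr x
  have hs2 := heqs x
  rw [hip r] at hr2
  rw [hip s] at hs2
  simp only [lap] at hr2 hs2 ⊢
  simp only [dvg]
  calc (1/2) * (∑ i : Fin n, fderiv ℝ (fun y => fderiv ℝ (fun z => r z * s z) y (e i)) x (e i))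
        + (∑ i : Fin n, fderiv ℝ (fun y => ((r y * s y) • (p - (r y)⁻¹ • gradient r y)) i) x (e i))
      = - s x * ((1/2) * ∑ i : Fin n, fderiv ℝ (fun y => fderiv ℝ r y (e i)) x (e i))
        + r x * ((1/2) * ∑ i : Fin n, fderiv ℝ (fun y => fderiv ℝ s y (e i)) x (e i))
        + s x * (∑ i : Fin n, p i * fderiv ℝ r x (e i))
        + r x * (∑ i : Fin n, p i * fderiv ℝ s x (e i)) := by
        simp only [hdvg, hlap]
        rw [Finset.mul_sum, ← Finset.sum_add_distrib]
        simp only [Finset.mul_sum, ← Finset.sum_add_distrib]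
        exact Finset.sum_congr rfl fun i _ => by ring
    _ = 0 := by
        have h1 : (1/2 : ℝ) * ∑ i : Fin n, fderiv ℝ (fun y => fderiv ℝ r y (e i)) x (e i)
            = ∑ i : Fin n, p i * fderiv ℝ r x (e i) + -(V x + E) * r x := by linarith
        have h2 : (1/2 : ℝ) * ∑ i : Fin n, fderiv ℝ (fun y => fderiv ℝ s y (e i)) x (e i)
            = -(∑ i : Fin n, p i * fderiv ℝ s x (e i)) + -(V x + E) * s x := by linarith
        rw [h1, h2]
        ring
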